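/- Let S = {(v,w) ∈ ℕ² : v² + w² ≤ 16} index the degree-4 Euclidean order basis (17 modes) on the reference quadrilateral. Let M be the diagonal real S×S matrix with M_{(v,w),(v,w)} = 4/((2v+1)(2w+1)). For real parameters q0, q1, q2, q3, let Q be the symmetric S×S matrix whose only nonzero entries (listing one entry of each symmetric pair) are Q_{(0,4),(0,4)} = Q_{(4,0),(4,0)} = q0, Q_{(0,4),(4,0)} = q3, Q_{(1,2),(3,2)} = −5·q2/3, Q_{(1,3),(3,1)} = 25·q2/9, Q_{(2,1),(2,3)} = −5·q2/3, Q_{(2,2),(2,2)} = q2, and Q_{(2,3),(2,3)} = Q_{(3,2),(3,2)} = q1. Then M + Q is positive definite if and only if the following five conditions all hold: q0 > −4/9; q2 > −4/25; 420·q1 + 48 − 4375·q2² > 0; 144 − 30625·q2² > 0; and 9·q0·(9·q0 + 8) − 81·q3² + 16 > 0. -/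

import Mathlib

/-- The index set of the degree-4 Euclidean order basis (17 modes):
modes `(v,w)` with `v² + w² ≤ 16`. -/
def EO4 : Type := {p : Fin 5 × Fin 5 // (p.1 : ℕ) ^ 2 + (p.2 : ℕ) ^ 2 ≤ 16}

instance : Fintype EO4 := Subtype.fintype _
instance : DecidableEq EO4 := Subtype.instDecidableEq

/-- Modal mass matrix of the degree-4 Euclidean order Legendre basis:
`M_{(v,w),(v,w)} = 4/((2v+1)(2w+1))`. -/
noncomputable def massEO4 : Matrix EO4 EO4 ℝ :=
  Matrix.diagonal fun p =>
    (4 : ℝ) / (((2 * (p.val.1 : ℕ) + 1) * (2 * (p.val.2 : ℕ) + 1) : ℕ) : ℝ)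

/-- The symmetric filter matrix `Q(q0, q1, q2, q3)` for the degree-4 Euclidean order
basis. -/
noncomputable def filterEO4 (q0 q1 q2 q3 : ℝ) : Matrix EO4 EO4 ℝ :=
  fun i j =>
    if (i.val = (0, 4) ∧ j.val = (0, 4)) ∨ (i.val = (4, 0) ∧ j.val = (4, 0)) then q0
    else if (i.val = (0, 4) ∧ j.val = (4, 0)) ∨ (i.val = (4, 0) ∧ j.val = (0, 4)) then q3
    else if (i.val = (1, 2) ∧ j.val = (3, 2)) ∨ (i.val = (3, 2) ∧ j.val = (1, 2)) ∨
            (i.val = (2, 1) ∧ j.val = (2, 3)) ∨ (i.val = (2, 3) ∧ j.val = (2, 1)) then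
      -5 * q2 / 3
    else if (i.val = (1, 3) ∧ j.val = (3, 1)) ∨ (i.val = (3, 1) ∧ j.val = (1, 3)) then
      25 * q2 / 9
    else if i.val = (2, 2) ∧ j.val = (2, 2) then q2
    else if (i.val = (2, 3) ∧ j.val = (2, 3)) ∨ (i.val = (3, 2) ∧ j.val = (3, 2)) then q1
    else 0

/-- An enumeration of the 17 modes. -/
def eo : Fin 17 → EO4 :=
  ![⟨(0,0), by decide⟩, ⟨(0,1), by decide⟩, ⟨(0,2), by decide⟩, ⟨(0,3), by decide⟩,
    ⟨(0,4), by decide⟩, ⟨(1,0), by decide⟩, ⟨(1,1), by decide⟩, ⟨(1,2), by decide⟩,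
    ⟨(1,3), by decide⟩, ⟨(2,0), by decide⟩, ⟨(2,1), by decide⟩, ⟨(2,2), by decide⟩,
    ⟨(2,3), by decide⟩, ⟨(3,0), by decide⟩, ⟨(3,1), by decide⟩, ⟨(3,2), by decide⟩,
    ⟨(4,0), by decide⟩]

lemma eo_bij : Function.Bijective eo := by decide

lemma sum_eo (g : EO4 → ℝ) : ∑ i, g i = ∑ k : Fin 17, g (eo k) :=
  (Function.Bijective.sum_comp eo_bij g).symm

lemma sum_eo_explicit (g : EO4 → ℝ) :
    ∑ i, g i = g (eo 0) + g (eo 1) + g (eo 2) + g (eo 3) + g (eo 4) + g (eo 5) + g (eo 6) + g (eo 7) + g (eo 8) + g (eo 9) + g (eo 10) + g (eo 11) + g (eo 12) + g (eo 13) + g (eo 14) + g (eo 15) + g (eo 16) := by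
  rw [sum_eo]
  simp only [Fin.sum_univ_succ, Fin.sum_univ_zero, add_zero, ← add_assoc]
  rfl

lemma eo_vals :
    eo 0 = ⟨(0,0), by decide⟩ ∧
    eo 1 = ⟨(0,1), by decide⟩ ∧
    eo 2 = ⟨(0,2), by decide⟩ ∧
    eo 3 = ⟨(0,3), by decide⟩ ∧
    eo 4 = ⟨(0,4), by decide⟩ ∧
    eo 5 = ⟨(1,0), by decide⟩ ∧
    eo 6 = ⟨(1,1), by decide⟩ ∧
    eo 7 = ⟨(1,2), by decide⟩ ∧
    eo 8 = ⟨(1,3), by decide⟩ ∧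
    eo 9 = ⟨(2,0), by decide⟩ ∧
    eo 10 = ⟨(2,1), by decide⟩ ∧
    eo 11 = ⟨(2,2), by decide⟩ ∧
    eo 12 = ⟨(2,3), by decide⟩ ∧
    eo 13 = ⟨(3,0), by decide⟩ ∧
    eo 14 = ⟨(3,1), by decide⟩ ∧
    eo 15 = ⟨(3,2), by decide⟩ ∧
    eo 16 = ⟨(4,0), by decide⟩ := by
  refine ⟨?_, ?_, ?_, ?_, ?_, ?_, ?_, ?_, ?_, ?_, ?_, ?_, ?_, ?_, ?_, ?_, ?_⟩ <;> rfl

open Matrix in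
set_option maxHeartbeats 4000000 in
lemma quad_expand (q0 q1 q2 q3 : ℝ) (x : EO4 → ℝ) :
    x ⬝ᵥ ((massEO4 + filterEO4 q0 q1 q2 q3) *ᵥ x) =
      4 * x (⟨(0,0), by decide⟩ : EO4) ^ 2 + 4/3 * x (⟨(0,1), by decide⟩ : EO4) ^ 2
      + 4/3 * x (⟨(1,0), by decide⟩ : EO4) ^ 2
      + 4/5 * x (⟨(0,2), by decide⟩ : EO4) ^ 2 + 4/5 * x (⟨(2,0), by decide⟩ : EO4) ^ 2
      + 4/7 * x (⟨(0,3), by decide⟩ : EO4) ^ 2 + 4/7 * x (⟨(3,0), by decide⟩ : EO4) ^ 2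
      + ((4/9 + q0) * x (⟨(0,4), by decide⟩ : EO4) ^ 2
          + 2 * q3 * x (⟨(0,4), by decide⟩ : EO4) * x (⟨(4,0), by decide⟩ : EO4)
          + (4/9 + q0) * x (⟨(4,0), by decide⟩ : EO4) ^ 2)
      + 4/9 * x (⟨(1,1), by decide⟩ : EO4) ^ 2
      + (4/15 * x (⟨(1,2), by decide⟩ : EO4) ^ 2
          + 2 * (-5 * q2 / 3) * x (⟨(1,2), by decide⟩ : EO4) * x (⟨(3,2), by decide⟩ : EO4)
          + (4/35 + q1) * x (⟨(3,2), by decide⟩ : EO4) ^ 2)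
      + (4/15 * x (⟨(2,1), by decide⟩ : EO4) ^ 2
          + 2 * (-5 * q2 / 3) * x (⟨(2,1), by decide⟩ : EO4) * x (⟨(2,3), by decide⟩ : EO4)
          + (4/35 + q1) * x (⟨(2,3), by decide⟩ : EO4) ^ 2)
      + (4/21 * x (⟨(1,3), by decide⟩ : EO4) ^ 2
          + 2 * (25 * q2 / 9) * x (⟨(1,3), by decide⟩ : EO4) * x (⟨(3,1), by decide⟩ : EO4)
          + 4/21 * x (⟨(3,1), by decide⟩ : EO4) ^ 2)
      + (4/25 + q2) * x (⟨(2,2), by decide⟩ : EO4) ^ 2 := by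
  simp only [dotProduct, Matrix.mulVec, Matrix.add_apply, sum_eo_explicit]
  simp (config := { decide := true }) only [massEO4, filterEO4, Matrix.diagonal,
    Fin.sum_univ_succ, Finset.sum_const, Matrix.cons_val_zero, Matrix.cons_val_succ,
    Matrix.of_apply, Finset.univ_unique, Fin.default_eq_zero, Finset.sum_singleton,
    Fin.isValue, if_true, if_false]
  simp only [eo_vals]
  norm_num [show ((3:Fin 5):ℕ) = 3 from rfl, show ((4:Fin 5):ℕ) = 4 from rfl]
  ring

lemma quad_nonneg {a b c : ℝ} (ha : 0 < a) (h : b ^ 2 < a * c) (t s : ℝ) :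
    0 ≤ a * t ^ 2 + 2 * b * t * s + c * s ^ 2 := by
  have h2 : 0 ≤ (a * c - b ^ 2) * s ^ 2 := mul_nonneg (by linarith) (sq_nonneg s)
  nlinarith [sq_nonneg (a * t + b * s)]

lemma quad_pos {a b c : ℝ} (ha : 0 < a) (h : b ^ 2 < a * c) {t s : ℝ}
    (hts : t ≠ 0 ∨ s ≠ 0) :
    0 < a * t ^ 2 + 2 * b * t * s + c * s ^ 2 := by
  rcases eq_or_ne s 0 with rfl | hs
  · have ht : t ≠ 0 := by tauto
    have : 0 < t ^ 2 := by positivity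
    nlinarith
  · have h2 : 0 < (a * c - b ^ 2) * s ^ 2 :=
      mul_pos (by linarith) (by positivity)
    nlinarith [sq_nonneg (a * t + b * s)]

open Matrix in
set_option maxHeartbeats 4000000 in
/-- For the degree-4 Euclidean order basis, `M + Q` is positive definite iff the five
stated inequalities hold. -/
theorem stmt_7 (q0 q1 q2 q3 : ℝ) :
    (massEO4 + filterEO4 q0 q1 q2 q3).PosDef ↔
      q0 > -4 / 9 ∧
      q2 > -4 / 25 ∧
      420 * q1 + 48 - 4375 * q2 ^ 2 > 0 ∧
      144 - 30625 * q2 ^ 2 > 0 ∧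
      9 * q0 * (9 * q0 + 8) - 81 * q3 ^ 2 + 16 > 0 := by
  have hstar : ∀ x : EO4 → ℝ, star x = x := fun x => funext fun i => star_trivial _
  constructor
  · intro hpd
    have key : ∀ x : EO4 → ℝ, x ≠ 0 →
        0 < x ⬝ᵥ ((massEO4 + filterEO4 q0 q1 q2 q3) *ᵥ x) := by
      intro x hx
      have := hpd.dotProduct_mulVec_pos hx
      rwa [hstar] at this
    have h1 : q0 > -4 / 9 := by
      have h := key (fun i => if i.val = ((0:Fin 5), (4:Fin 5)) then 1 else 0)
        (by
          intro hz
          have := congrFun hz (⟨(0,4), by decide⟩ : EO4)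
          norm_num at this
          exact one_ne_zero this)
      rw [quad_expand] at h
      simp (config := { decide := true }) only [Prod.mk.injEq] at h
      norm_num at h
      linarith
    have h2 : q2 > -4 / 25 := by
      have h := key (fun i => if i.val = ((2:Fin 5), (2:Fin 5)) then 1 else 0)
        (by
          intro hz
          have := congrFun hz (⟨(2,2), by decide⟩ : EO4)
          norm_num at this
          exact one_ne_zero this)
      rw [quad_expand] at h
      simp (config := { decide := true }) only [Prod.mk.injEq] at h
      norm_num at h
      linarith
    have h5 : 9 * q0 * (9 * q0 + 8) - 81 * q3 ^ 2 + 16 > 0 := by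
      have hp := key (fun i => if i.val = ((0:Fin 5), (4:Fin 5)) then 1
          else if i.val = ((4:Fin 5), (0:Fin 5)) then 1 else 0)
        (by
          intro hz
          have := congrFun hz (⟨(0,4), by decide⟩ : EO4)
          norm_num at this
          exact one_ne_zero this)
      have hm := key (fun i => if i.val = ((0:Fin 5), (4:Fin 5)) then 1
          else if i.val = ((4:Fin 5), (0:Fin 5)) then -1 else 0)
        (by
          intro hz
          have := congrFun hz (⟨(0,4), by decide⟩ : EO4)
          norm_num at this
          exact one_ne_zero this)
      rw [quad_expand] at hp hm
      simp (config := { decide := true }) only [Prod.mk.injEq] at hp hm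
      norm_num at hp hm
      nlinarith [mul_pos hp hm]
    have h4 : 144 - 30625 * q2 ^ 2 > 0 := by
      have hp := key (fun i => if i.val = ((1:Fin 5), (3:Fin 5)) then 1
          else if i.val = ((3:Fin 5), (1:Fin 5)) then 1 else 0)
        (by
          intro hz
          have := congrFun hz (⟨(1,3), by decide⟩ : EO4)
          norm_num at this
          exact one_ne_zero this)
      have hm := key (fun i => if i.val = ((1:Fin 5), (3:Fin 5)) then 1
          else if i.val = ((3:Fin 5), (1:Fin 5)) then -1 else 0)
        (by
          intro hz
          have := congrFun hz (⟨(1,3), by decide⟩ : EO4)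
          norm_num at this
          exact one_ne_zero this)
      rw [quad_expand] at hp hm
      simp (config := { decide := true }) only [Prod.mk.injEq] at hp hm
      norm_num at hp hm
      nlinarith [mul_pos hp hm]
    have h3 : 420 * q1 + 48 - 4375 * q2 ^ 2 > 0 := by
      have h := key (fun i => if i.val = ((1:Fin 5), (2:Fin 5)) then 5 * q2 / 3
          else if i.val = ((3:Fin 5), (2:Fin 5)) then 4/15 else 0)
        (by
          intro hz
          have := congrFun hz (⟨(3,2), by decide⟩ : EO4)
          simp (config := { decide := true }) only [Prod.mk.injEq] at this
          norm_num at this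
          exact (by norm_num : (4/15:ℝ) ≠ 0) this)
      rw [quad_expand] at h
      simp (config := { decide := true }) only [Prod.mk.injEq] at h
      norm_num at h
      nlinarith [h]
    exact ⟨h1, h2, h3, h4, h5⟩
  · rintro ⟨h1, h2, h3, h4, h5⟩
    have hsymF : ∀ i j : EO4, filterEO4 q0 q1 q2 q3 i j = filterEO4 q0 q1 q2 q3 j i := by
      intro i j
      unfold filterEO4
      exact if_congr (by tauto) rfl (if_congr (by tauto) rfl (if_congr (by tauto) rfl
        (if_congr (by tauto) rfl (if_congr (by tauto) rfl
          (if_congr (by tauto) rfl rfl)))))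
    have hsymM : ∀ i j : EO4, massEO4 i j = massEO4 j i := by
      intro i j
      rcases eq_or_ne i j with rfl | h
      · rfl
      · unfold massEO4
        rw [Matrix.diagonal_apply_ne _ h, Matrix.diagonal_apply_ne _ h.symm]
    refine Matrix.posDef_iff_dotProduct_mulVec.mpr ⟨?_, ?_⟩
    · exact Matrix.ext fun i j => by
        rw [Matrix.conjTranspose_apply, Matrix.add_apply, Matrix.add_apply,
          hsymM j i, hsymF j i, star_trivial]
    · intro x hx
      rw [hstar, quad_expand]
      have hA : (0:ℝ) < 4/9 + q0 := by linarith
      have hAd : q3 ^ 2 < (4/9 + q0) * (4/9 + q0) := by nlinarith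
      have hB : (0:ℝ) < 4/15 := by norm_num
      have hBd : (-5 * q2 / 3) ^ 2 < (4/15) * (4/35 + q1) := by nlinarith
      have hD : (0:ℝ) < 4/21 := by norm_num
      have hDd : (25 * q2 / 9) ^ 2 < (4/21) * (4/21) := by nlinarith
      have hE : (0:ℝ) < 4/25 + q2 := by linarith
      have f1 := quad_nonneg hA hAd (x (⟨(0,4), by decide⟩ : EO4)) (x (⟨(4,0), by decide⟩ : EO4))
      have f2 := quad_nonneg hB hBd (x (⟨(1,2), by decide⟩ : EO4)) (x (⟨(3,2), by decide⟩ : EO4))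
      have f3 := quad_nonneg hB hBd (x (⟨(2,1), by decide⟩ : EO4)) (x (⟨(2,3), by decide⟩ : EO4))
      have f4 := quad_nonneg hD hDd (x (⟨(1,3), by decide⟩ : EO4)) (x (⟨(3,1), by decide⟩ : EO4))
      have f5 : (0:ℝ) ≤ (4/25 + q2) * x (⟨(2,2), by decide⟩ : EO4) ^ 2 :=
        mul_nonneg hE.le (sq_nonneg _)
      have g1 := sq_nonneg (x (⟨(0,0), by decide⟩ : EO4))
      have g2 := sq_nonneg (x (⟨(0,1), by decide⟩ : EO4))
      have g3 := sq_nonneg (x (⟨(1,0), by decide⟩ : EO4))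
      have g4 := sq_nonneg (x (⟨(0,2), by decide⟩ : EO4))
      have g5 := sq_nonneg (x (⟨(2,0), by decide⟩ : EO4))
      have g6 := sq_nonneg (x (⟨(0,3), by decide⟩ : EO4))
      have g7 := sq_nonneg (x (⟨(3,0), by decide⟩ : EO4))
      have g8 := sq_nonneg (x (⟨(1,1), by decide⟩ : EO4))
      obtain ⟨i, hi⟩ := Function.ne_iff.mp hx
      obtain ⟨k, rfl⟩ := eo_bij.2 i
      fin_cases k
      · have hi' : x (⟨(0,0), by decide⟩ : EO4) ≠ 0 := hi
        have := sq_pos_of_ne_zero hi'; linarith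
      · have hi' : x (⟨(0,1), by decide⟩ : EO4) ≠ 0 := hi
        have := sq_pos_of_ne_zero hi'; linarith
      · have hi' : x (⟨(0,2), by decide⟩ : EO4) ≠ 0 := hi
        have := sq_pos_of_ne_zero hi'; linarith
      · have hi' : x (⟨(0,3), by decide⟩ : EO4) ≠ 0 := hi
        have := sq_pos_of_ne_zero hi'; linarith
      · have hi' : x (⟨(0,4), by decide⟩ : EO4) ≠ 0 := hi
        have := quad_pos hA hAd (t := x (⟨(0,4), by decide⟩ : EO4))
          (s := x (⟨(4,0), by decide⟩ : EO4)) (Or.inl hi'); linarith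
      · have hi' : x (⟨(1,0), by decide⟩ : EO4) ≠ 0 := hi
        have := sq_pos_of_ne_zero hi'; linarith
      · have hi' : x (⟨(1,1), by decide⟩ : EO4) ≠ 0 := hi
        have := sq_pos_of_ne_zero hi'; linarith
      · have hi' : x (⟨(1,2), by decide⟩ : EO4) ≠ 0 := hi
        have := quad_pos hB hBd (t := x (⟨(1,2), by decide⟩ : EO4))
          (s := x (⟨(3,2), by decide⟩ : EO4)) (Or.inl hi'); linarith
      · have hi' : x (⟨(1,3), by decide⟩ : EO4) ≠ 0 := hi
        have := quad_pos hD hDd (t := x (⟨(1,3), by decide⟩ : EO4))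
          (s := x (⟨(3,1), by decide⟩ : EO4)) (Or.inl hi'); linarith
      · have hi' : x (⟨(2,0), by decide⟩ : EO4) ≠ 0 := hi
        have := sq_pos_of_ne_zero hi'; linarith
      · have hi' : x (⟨(2,1), by decide⟩ : EO4) ≠ 0 := hi
        have := quad_pos hB hBd (t := x (⟨(2,1), by decide⟩ : EO4))
          (s := x (⟨(2,3), by decide⟩ : EO4)) (Or.inl hi'); linarith
      · have hi' : x (⟨(2,2), by decide⟩ : EO4) ≠ 0 := hi
        have := mul_pos hE (sq_pos_of_ne_zero hi'); linarith
      · have hi' : x (⟨(2,3), by decide⟩ : EO4) ≠ 0 := hi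
        have := quad_pos hB hBd (t := x (⟨(2,1), by decide⟩ : EO4))
          (s := x (⟨(2,3), by decide⟩ : EO4)) (Or.inr hi'); linarith
      · have hi' : x (⟨(3,0), by decide⟩ : EO4) ≠ 0 := hi
        have := sq_pos_of_ne_zero hi'; linarith
      · have hi' : x (⟨(3,1), by decide⟩ : EO4) ≠ 0 := hi
        have := quad_pos hD hDd (t := x (⟨(1,3), by decide⟩ : EO4))
          (s := x (⟨(3,1), by decide⟩ : EO4)) (Or.inr hi'); linarith
      · have hi' : x (⟨(3,2), by decide⟩ : EO4) ≠ 0 := hi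
        have := quad_pos hB hBd (t := x (⟨(1,2), by decide⟩ : EO4))
          (s := x (⟨(3,2), by decide⟩ : EO4)) (Or.inr hi'); linarith
      · have hi' : x (⟨(4,0), by decide⟩ : EO4) ≠ 0 := hi
        have := quad_pos hA hAd (t := x (⟨(0,4), by decide⟩ : EO4))
          (s := x (⟨(4,0), by decide⟩ : EO4)) (Or.inr hi'); linarith
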